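/- arXiv:2509.12054 — 3 statements merged into one kernel-verified Lean document; each statement's English description precedes it below -/
import Mathlib

section
/- For each fixed k, the sequence of Walsh–Fourier coefficients \hatφ_s^n(k) of the truncated kernels is nondecreasing in n (for n with 2^n > k) and converges to \hatφ_s(k), the Walsh–Fourier coefficient of the full s-kernel. -/
open MeasureTheory Filter Topology
open scoped ENNReal Classical

/-- The Cantor dyadic group: sequences of 0s and 1s with coordinatewise addition mod 2. -/
abbrev G : Type := ℕ → ZMod 2

/-- The metric ρ(x,y) = ∑_{i=1}^∞ 2^{-i} |x_i - y_i| (coordinates indexed from 0 here). -/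
noncomputable def rho (x y : G) : ℝ :=
  ∑' i : ℕ, (2:ℝ) ^ (-(i:ℝ) - 1) * (if x i = y i then 0 else 1)

/-- The subgroup G_n of sequences vanishing in the first n coordinates. -/
def Gset (n : ℕ) : Set G := {x | ∀ i < n, x i = 0}

/-- The coset K_n(x) = x + G_n of G_n containing x. -/
def Kset (n : ℕ) (x : G) : Set G := {y | x - y ∈ Gset n}

/-- The k-th Walsh function. -/
def walsh (k : ℕ) (x : G) : ℝ :=
  ∏ i ∈ Finset.range k, if k.testBit i ∧ x i = 1 then (-1 : ℝ) else 1

/-- The s-kernel: φ_s(0) = 0 and φ_s(x) = 2^{s(n-1)} for x ∈ G_{n-1} \ G_n,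
i.e. 2^{s j} where j is the first nonzero coordinate of x. -/
noncomputable def kernel (s : ℝ) (x : G) : ℝ :=
  if h : ∃ i, x i ≠ 0 then (2:ℝ) ^ (s * (Nat.find h : ℝ)) else 0

/-- The truncated s-kernel φ_s^n. -/
noncomputable def kernelTrunc (s : ℝ) (n : ℕ) (x : G) : ℝ :=
  if x = 0 then 0 else if x ∈ Gset n then (2:ℝ) ^ (s * (n:ℝ)) else kernel s x

/-- Walsh–Fourier coefficient of the s-kernel w.r.t. a (Haar) measure lam. -/
noncomputable def phiHat (s : ℝ) (lam : Measure G) (k : ℕ) : ℝ :=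
  ∫ x, kernel s x * walsh k x ∂lam

/-- Walsh–Fourier coefficient of the truncated s-kernel. -/
noncomputable def phiHatTrunc (s : ℝ) (n : ℕ) (lam : Measure G) (k : ℕ) : ℝ :=
  ∫ x, kernelTrunc s n x * walsh k x ∂lam

/-- Walsh–Fourier coefficient of a measure μ. -/
noncomputable def muHat (μ : Measure G) (k : ℕ) : ℝ :=
  ∫ x, walsh k x ∂μ

/-- s-potential of μ at x. -/
noncomputable def potential (s : ℝ) (μ : Measure G) (x : G) : ℝ≥0∞ :=
  ∫⁻ y, ENNReal.ofReal (kernel s (x - y)) ∂μ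

/-- s-energy of μ. -/
noncomputable def energy (s : ℝ) (μ : Measure G) : ℝ≥0∞ :=
  ∫⁻ x, ∫⁻ y, ENNReal.ofReal (kernel s (x - y)) ∂μ ∂μ

/-- truncated s-energy of μ. -/
noncomputable def energyTrunc (s : ℝ) (n : ℕ) (μ : Measure G) : ℝ≥0∞ :=
  ∫⁻ x, ∫⁻ y, ENNReal.ofReal (kernelTrunc s n (x - y)) ∂μ ∂μ

/-- Diameter of a set in the metric ρ, valued in ℝ≥0∞. -/
noncomputable def diamRho (I : Set G) : ℝ≥0∞ :=
  ⨆ x ∈ I, ⨆ y ∈ I, ENNReal.ofReal (rho x y)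

/-- Pre-Hausdorff measure H^s_δ via countable covers of ρ-diameter < δ. -/
noncomputable def Hdelta (s : ℝ) (δ : ℝ≥0∞) (A : Set G) : ℝ≥0∞ :=
  ⨅ (I : ℕ → Set G) (_ : A ⊆ ⋃ i, I i) (_ : ∀ i, diamRho (I i) < δ),
    ∑' i, diamRho (I i) ^ s

/-- s-dimensional Hausdorff measure w.r.t. the metric ρ. -/
noncomputable def Hmeas (s : ℝ) (A : Set G) : ℝ≥0∞ :=
  ⨆ (δ : ℝ≥0∞) (_ : 0 < δ), Hdelta s δ A

/-- Hausdorff dimension w.r.t. the metric ρ. -/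
noncomputable def hdimRho (A : Set G) : ℝ≥0∞ :=
  ⨆ (t : ℝ) (_ : Hmeas t A = ⊤), ENNReal.ofReal t



section Aux

lemma measurableSet_Gset (n : ℕ) : MeasurableSet (Gset n) := by
  have : Gset n = ⋂ i ∈ Finset.range n, {x : G | x i = 0} := by ext x; simp [Gset]
  rw [this]
  exact MeasurableSet.biInter (Finset.range n).countable_toSet
    (fun i _ => measurable_pi_apply i (MeasurableSet.singleton 0))

lemma Gset_antitone {m n : ℕ} (h : m ≤ n) : Gset n ⊆ Gset m :=
  fun x hx i hi => hx i (lt_of_lt_of_le hi h)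

lemma measurable_walsh (k : ℕ) : Measurable (walsh k) := by
  unfold walsh
  apply Finset.measurable_prod
  intro i _
  apply Measurable.ite _ measurable_const measurable_const
  have h : {a : G | k.testBit i ∧ a i = 1} = if k.testBit i then {x : G | x i = 1} else ∅ := by
    split <;> ext x <;> simp_all
  rw [h]
  split
  · exact measurable_pi_apply i (MeasurableSet.singleton 1)
  · exact MeasurableSet.empty

lemma abs_walsh_le (k : ℕ) (x : G) : |walsh k x| ≤ 1 := by
  unfold walsh
  rw [Finset.abs_prod]
  apply Finset.prod_le_one (fun i _ => abs_nonneg _)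
  intro i _
  split <;> simp

lemma walsh_eq_one {k m : ℕ} (hk : k < 2 ^ m) {x : G} (hx : x ∈ Gset m) : walsh k x = 1 := by
  unfold walsh
  apply Finset.prod_eq_one
  intro i _
  rcases lt_or_ge i m with h | h
  · have := hx i h
    simp [this]
  · have : k.testBit i = false :=
      Nat.testBit_lt_two_pow (lt_of_lt_of_le hk (Nat.pow_le_pow_right (by norm_num) h))
    simp [this]

/-- the level set: first nonzero coordinate is j -/
def Tset (j : ℕ) : Set G := {x | (∀ i < j, x i = 0) ∧ x j ≠ 0}

lemma measurableSet_Tset (j : ℕ) : MeasurableSet (Tset j) := by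
  have : Tset j = Gset j ∩ {x : G | x j = 0}ᶜ := by ext x; simp [Tset, Gset]
  rw [this]
  exact (measurableSet_Gset j).inter (measurable_pi_apply j (MeasurableSet.singleton 0)).compl

lemma Tset_subset_Gset (j : ℕ) : Tset j ⊆ Gset j := fun _ hx => hx.1

lemma ne_zero_iff (x : G) : x ≠ 0 ↔ ∃ i, x i ≠ 0 := by
  constructor
  · intro hx; by_contra h; push_neg at h; exact hx (funext h)
  · rintro ⟨i, hi⟩ h; exact hi (by simp [h])

lemma mem_Tset_iff {x : G} {j : ℕ} :
    x ∈ Tset j ↔ ∃ h : ∃ i, x i ≠ 0, Nat.find h = j := by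
  constructor
  · rintro ⟨h1, h2⟩
    refine ⟨⟨j, h2⟩, ?_⟩
    rw [Nat.find_eq_iff]
    exact ⟨h2, fun i hi => by simpa using h1 i hi⟩
  · rintro ⟨h, rfl⟩
    exact ⟨fun i hi => by simpa using Nat.find_min h hi, Nat.find_spec h⟩

lemma kernel_eq_on_Tset {s : ℝ} {x : G} {j : ℕ} (hx : x ∈ Tset j) :
    kernel s x = (2:ℝ) ^ (s * (j:ℝ)) := by
  obtain ⟨h, rfl⟩ := mem_Tset_iff.mp hx
  simp [kernel, h]

lemma kernel_zero (s : ℝ) : kernel s 0 = 0 := by simp [kernel]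

lemma kernel_nonneg (s : ℝ) (x : G) : 0 ≤ kernel s x := by
  unfold kernel; split
  · positivity
  · exact le_refl 0

lemma measurable_kernel (s : ℝ) : Measurable (kernel s) := by
  have key : ∀ x : G, Tendsto (fun n => ∑ j ∈ Finset.range n,
      Set.indicator (Tset j) (fun _ => (2:ℝ) ^ (s * (j:ℝ))) x) atTop (𝓝 (kernel s x)) := by
    intro x
    by_cases hx : ∃ i, x i ≠ 0
    · apply tendsto_atTop_of_eventually_const (i₀ := Nat.find hx + 1)
      intro n hn
      have hmem : x ∈ Tset (Nat.find hx) := mem_Tset_iff.mpr ⟨hx, rfl⟩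
      rw [Finset.sum_eq_single (Nat.find hx)]
      · rw [Set.indicator_of_mem hmem, kernel_eq_on_Tset hmem]
      · intro j _ hj
        apply Set.indicator_of_notMem
        intro hmem'
        obtain ⟨h, rfl⟩ := mem_Tset_iff.mp hmem'
        exact hj rfl
      · intro h; exact absurd (Finset.mem_range.mpr (by omega)) h
    · have hx0 : x = 0 := by
        by_contra h; exact hx ((ne_zero_iff x).mp h)
      subst hx0
      have hz : ∀ n, ∑ j ∈ Finset.range n,
          Set.indicator (Tset j) (fun _ => (2:ℝ) ^ (s * (j:ℝ))) (0:G) = 0 := by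
        intro n
        apply Finset.sum_eq_zero
        intro j _
        apply Set.indicator_of_notMem
        simp [Tset]
      simp only [hz, kernel_zero]
      exact tendsto_const_nhds
  exact measurable_of_tendsto_metrizable (fun n => Finset.measurable_sum _
    (fun j _ => measurable_const.indicator (measurableSet_Tset j))) (tendsto_pi_nhds.mpr key)

lemma measurable_kernelTrunc (s : ℝ) (n : ℕ) : Measurable (kernelTrunc s n) := by
  unfold kernelTrunc
  apply Measurable.ite (MeasurableSet.singleton 0) measurable_const
  exact Measurable.ite (measurableSet_Gset n) measurable_const (measurable_kernel s)

lemma kernelTrunc_nonneg {s : ℝ} (hs : 0 ≤ s) (n : ℕ) (x : G) : 0 ≤ kernelTrunc s n x := by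
  unfold kernelTrunc
  split
  · exact le_refl 0
  split
  · positivity
  · exact kernel_nonneg s x

lemma find_ge_of_mem_Gset {x : G} {n : ℕ} (hx : x ∈ Gset n) (h : ∃ i, x i ≠ 0) :
    (n : ℝ) ≤ (Nat.find h : ℝ) := by
  have : n ≤ Nat.find h := by
    rw [Nat.le_find_iff]
    intro m hm hc
    exact hc (hx m hm)
  exact_mod_cast this

lemma kernelTrunc_le_kernel {s : ℝ} (hs : 0 ≤ s) (n : ℕ) (x : G) :
    kernelTrunc s n x ≤ kernel s x := by
  unfold kernelTrunc
  split
  · rename_i h; rw [h, kernel_zero]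
  rename_i hx0
  split
  · rename_i hxG
    have h : ∃ i, x i ≠ 0 := (ne_zero_iff x).mp hx0
    rw [show kernel s x = (2:ℝ) ^ (s * (Nat.find h : ℝ)) by simp [kernel, h]]
    apply Real.rpow_le_rpow_of_exponent_le one_le_two
    exact mul_le_mul_of_nonneg_left (find_ge_of_mem_Gset hxG h) hs
  · exact le_refl _

lemma kernelTrunc_mono {s : ℝ} (hs : 0 ≤ s) {m n : ℕ} (hmn : m ≤ n) (x : G) :
    kernelTrunc s m x ≤ kernelTrunc s n x := by
  by_cases hx0 : x = 0
  · simp [kernelTrunc, hx0]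
  by_cases hxm : x ∈ Gset m
  · rw [show kernelTrunc s m x = (2:ℝ) ^ (s * (m:ℝ)) by simp [kernelTrunc, hx0, hxm]]
    by_cases hxn : x ∈ Gset n
    · rw [show kernelTrunc s n x = (2:ℝ) ^ (s * (n:ℝ)) by simp [kernelTrunc, hx0, hxn]]
      apply Real.rpow_le_rpow_of_exponent_le one_le_two
      exact mul_le_mul_of_nonneg_left (by exact_mod_cast hmn) hs
    · rw [show kernelTrunc s n x = kernel s x by simp [kernelTrunc, hx0, hxn]]
      have h : ∃ i, x i ≠ 0 := (ne_zero_iff x).mp hx0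
      rw [show kernel s x = (2:ℝ) ^ (s * (Nat.find h : ℝ)) by simp [kernel, h]]
      apply Real.rpow_le_rpow_of_exponent_le one_le_two
      exact mul_le_mul_of_nonneg_left (find_ge_of_mem_Gset hxm h) hs
  · have hxn : x ∉ Gset n := fun hc => hxm (Gset_antitone hmn hc)
    simp [kernelTrunc, hx0, hxm, hxn]

lemma measure_Gset_le (lam : Measure G) [IsProbabilityMeasure lam] [lam.IsAddLeftInvariant]
    (n : ℕ) : lam (Gset n) ≤ ((2:ℝ≥0∞) ^ n)⁻¹ := by
  set a : (Fin n → ZMod 2) → G := fun v i => if h : i < n then v ⟨i, h⟩ else 0 with ha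
  set C : (Fin n → ZMod 2) → Set G := fun v => (a v + ·) ⁻¹' Gset n with hCdef
  have hmemC : ∀ v x, x ∈ C v ↔ ∀ i (h : i < n), x i = v ⟨i, h⟩ := by
    intro v x
    constructor
    · intro hx i h
      have hxi := hx i h
      simp only [Pi.add_apply, ha, dif_pos h] at hxi
      have hxi' : v ⟨i, h⟩ + x i = 0 := hxi
      have h2 : x i = -(v ⟨i,h⟩) := by linear_combination hxi'
      rw [h2, CharTwo.neg_eq]
    · intro hx i h
      show (a v + x) i = 0
      simp only [Pi.add_apply, ha, dif_pos h, hx i h]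
      exact CharTwo.add_self_eq_zero _
  have hC : ∀ v, lam (C v) = lam (Gset n) := fun v => measure_preimage_add lam (a v) (Gset n)
  have hmeas : ∀ v, MeasurableSet (C v) :=
    fun v => (measurable_const_add (a v)) (measurableSet_Gset n)
  have hdisj : Pairwise (Function.onFun Disjoint C) := by
    intro v w hvw
    rw [Function.onFun, Set.disjoint_left]
    intro x hxv hxw
    apply hvw
    funext i
    have h1 := (hmemC v x).mp hxv i.1 i.2
    have h2 := (hmemC w x).mp hxw i.1 i.2
    rw [← h1, ← h2]
  have hsum : ∑' v : (Fin n → ZMod 2), lam (C v) ≤ 1 := by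
    rw [← measure_iUnion hdisj hmeas]
    exact (measure_mono (Set.subset_univ _)).trans (le_of_eq measure_univ)
  have hcard : (Fintype.card (Fin n → ZMod 2) : ℝ≥0∞) = 2 ^ n := by
    simp [Fintype.card_fun]
  rw [tsum_fintype] at hsum
  simp only [hC, Finset.sum_const, Finset.card_univ, nsmul_eq_mul] at hsum
  rw [hcard] at hsum
  rw [ENNReal.le_inv_iff_mul_le]
  calc lam (Gset n) * 2 ^ n = 2 ^ n * lam (Gset n) := mul_comm _ _
    _ ≤ 1 := hsum

lemma integrable_kernel {s : ℝ} (hs : 0 < s) (hs1 : s < 1)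
    (lam : Measure G) [IsProbabilityMeasure lam] [lam.IsAddLeftInvariant] :
    Integrable (kernel s) lam := by
  refine ⟨(measurable_kernel s).aestronglyMeasurable, ?_⟩
  rw [hasFiniteIntegral_iff_norm]
  have hpt : ∀ x : G, ENNReal.ofReal ‖kernel s x‖ ≤
      ∑' j : ℕ, Set.indicator (Tset j) (fun _ => ENNReal.ofReal ((2:ℝ) ^ (s * (j:ℝ)))) x := by
    intro x
    by_cases hx : ∃ i, x i ≠ 0
    · have hmem : x ∈ Tset (Nat.find hx) := mem_Tset_iff.mpr ⟨hx, rfl⟩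
      calc ENNReal.ofReal ‖kernel s x‖
          = Set.indicator (Tset (Nat.find hx))
              (fun _ => ENNReal.ofReal ((2:ℝ) ^ (s * (Nat.find hx : ℝ)))) x := by
            rw [Set.indicator_of_mem hmem, Real.norm_eq_abs,
              abs_of_nonneg (kernel_nonneg s x), kernel_eq_on_Tset hmem]
        _ ≤ _ := ENNReal.le_tsum (f := fun j : ℕ => Set.indicator (Tset j)
              (fun _ => ENNReal.ofReal ((2:ℝ) ^ (s * (j:ℝ)))) x) (Nat.find hx)
    · have hx0 : x = 0 := by by_contra h; exact hx ((ne_zero_iff x).mp h)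
      subst hx0
      simp [kernel_zero]
  calc ∫⁻ x, ENNReal.ofReal ‖kernel s x‖ ∂lam
      ≤ ∫⁻ x, ∑' j : ℕ, Set.indicator (Tset j)
          (fun _ => ENNReal.ofReal ((2:ℝ) ^ (s * (j:ℝ)))) x ∂lam := lintegral_mono hpt
    _ = ∑' j : ℕ, ∫⁻ x, Set.indicator (Tset j)
          (fun _ => ENNReal.ofReal ((2:ℝ) ^ (s * (j:ℝ)))) x ∂lam :=
        lintegral_tsum (fun j => (measurable_const.indicator (measurableSet_Tset j)).aemeasurable)
    _ = ∑' j : ℕ, ENNReal.ofReal ((2:ℝ) ^ (s * (j:ℝ))) * lam (Tset j) := by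
        congr 1; funext j
        exact lintegral_indicator_const (measurableSet_Tset j) _
    _ ≤ ∑' j : ℕ, (ENNReal.ofReal ((2:ℝ) ^ s) * 2⁻¹) ^ j := by
        apply ENNReal.tsum_le_tsum
        intro j
        have h1 : lam (Tset j) ≤ ((2:ℝ≥0∞) ^ j)⁻¹ :=
          (measure_mono (Tset_subset_Gset j)).trans (measure_Gset_le lam j)
        have h2 : ENNReal.ofReal ((2:ℝ) ^ (s * (j:ℝ))) = (ENNReal.ofReal ((2:ℝ) ^ s)) ^ j := by
          rw [← ENNReal.ofReal_pow (Real.rpow_nonneg (by norm_num) s)]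
          congr 1
          rw [Real.rpow_mul (by norm_num : (0:ℝ) ≤ 2), Real.rpow_natCast]
        rw [h2, mul_pow]
        calc (ENNReal.ofReal ((2:ℝ) ^ s)) ^ j * lam (Tset j)
            ≤ (ENNReal.ofReal ((2:ℝ) ^ s)) ^ j * ((2:ℝ≥0∞) ^ j)⁻¹ := by
              exact mul_le_mul_right h1 _
          _ = (ENNReal.ofReal ((2:ℝ) ^ s)) ^ j * (2⁻¹ : ℝ≥0∞) ^ j := by
              rw [ENNReal.inv_pow]
    _ < ⊤ := by
        rw [ENNReal.tsum_geometric]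
        apply ENNReal.inv_lt_top.mpr
        rw [tsub_pos_iff_lt]
        have h2s : (2:ℝ) ^ s < 2 := by
          calc (2:ℝ) ^ s < 2 ^ (1:ℝ) := Real.rpow_lt_rpow_of_exponent_lt one_lt_two hs1
            _ = 2 := Real.rpow_one 2
        have : ENNReal.ofReal ((2:ℝ) ^ s) < 2 := by
          calc ENNReal.ofReal ((2:ℝ) ^ s) < ENNReal.ofReal 2 :=
              (ENNReal.ofReal_lt_ofReal_iff (by norm_num)).mpr h2s
            _ = 2 := by norm_num
        calc ENNReal.ofReal ((2:ℝ) ^ s) * 2⁻¹ < 2 * 2⁻¹ :=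
              ENNReal.mul_lt_mul_left (by norm_num) (by norm_num) this
          _ = 1 := ENNReal.mul_inv_cancel (by norm_num) (by norm_num)

lemma integrable_trunc_mul {s : ℝ} (hs : 0 < s) (hs1 : s < 1)
    (lam : Measure G) [IsProbabilityMeasure lam] [lam.IsAddLeftInvariant] (n k : ℕ) :
    Integrable (fun x => kernelTrunc s n x * walsh k x) lam := by
  apply (integrable_kernel hs hs1 lam).mono
    (((measurable_kernelTrunc s n).mul (measurable_walsh k)).aestronglyMeasurable)
  apply ae_of_all
  intro x
  rw [Real.norm_eq_abs, Real.norm_eq_abs, Pi.mul_apply, abs_mul, abs_of_nonneg (kernel_nonneg s x),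
    abs_of_nonneg (kernelTrunc_nonneg hs.le n x)]
  calc kernelTrunc s n x * |walsh k x| ≤ kernelTrunc s n x * 1 :=
      mul_le_mul_of_nonneg_left (abs_walsh_le k x) (kernelTrunc_nonneg hs.le n x)
    _ = kernelTrunc s n x := mul_one _
    _ ≤ kernel s x := kernelTrunc_le_kernel hs.le n x

end Aux

/-- For fixed k, \hatφ_s^n(k) is nondecreasing in n (for 2^n > k) and converges to \hatφ_s(k). -/
theorem stmt9 (s : ℝ) (hs : 0 < s) (hs1 : s < 1)
    (lam : Measure G) [IsProbabilityMeasure lam] [lam.IsAddLeftInvariant] (k : ℕ) :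
    (∀ m n : ℕ, m ≤ n → k < 2 ^ m → phiHatTrunc s m lam k ≤ phiHatTrunc s n lam k) ∧
    Tendsto (fun n => phiHatTrunc s n lam k) atTop (𝓝 (phiHat s lam k)) := by
  constructor
  · -- monotonicity
    intro m n hmn hk
    apply integral_mono (integrable_trunc_mul hs hs1 lam m k) (integrable_trunc_mul hs hs1 lam n k)
    intro x
    show kernelTrunc s m x * walsh k x ≤ kernelTrunc s n x * walsh k x
    by_cases hxm : x ∈ Gset m
    · rw [walsh_eq_one hk hxm]
      simpa using kernelTrunc_mono hs.le hmn x
    · have hxn : x ∉ Gset n := fun hc => hxm (Gset_antitone hmn hc)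
      have hx0 : x ≠ 0 := by
        intro h; subst h; exact hxm (fun i _ => rfl)
      simp [kernelTrunc, hx0, hxm, hxn]
  · -- convergence
    apply tendsto_integral_of_dominated_convergence (kernel s)
      (fun n => ((measurable_kernelTrunc s n).mul (measurable_walsh k)).aestronglyMeasurable)
      (integrable_kernel hs hs1 lam)
    · intro n
      apply ae_of_all
      intro x
      rw [Real.norm_eq_abs, Pi.mul_apply, abs_mul, abs_of_nonneg (kernelTrunc_nonneg hs.le n x)]
      calc kernelTrunc s n x * |walsh k x| ≤ kernelTrunc s n x * 1 :=
          mul_le_mul_of_nonneg_left (abs_walsh_le k x) (kernelTrunc_nonneg hs.le n x)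
        _ = kernelTrunc s n x := mul_one _
        _ ≤ kernel s x := kernelTrunc_le_kernel hs.le n x
    · apply ae_of_all
      intro x
      by_cases hx0 : x = 0
      · subst hx0
        have hz : ∀ n : ℕ, kernelTrunc s n 0 * walsh k 0 = 0 := by
          intro n; simp [kernelTrunc]
        simp only [Pi.mul_apply, hz, kernel_zero, zero_mul]
        exact tendsto_const_nhds
      · have h : ∃ i, x i ≠ 0 := (ne_zero_iff x).mp hx0
        apply tendsto_atTop_of_eventually_const (i₀ := Nat.find h + 1)
        intro n hn
        have hxn : x ∉ Gset n := fun hc => Nat.find_spec h (hc (Nat.find h) (by omega))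
        simp [kernelTrunc, hx0, hxn]
end

section
/- Let μ be a finite nonatomic Borel measure on the Cantor dyadic group with finite s-energy I_s(μ) = ∫_G ∫_G φ_s(x - y) dμ(y) dμ(x) < ∞. Then the set E_1 = {x : limsup_{n→∞} μ(K_n(x)) 2^{ns} > 0} has μ-measure zero. -/
open MeasureTheory Filter Topology
open scoped ENNReal Classical

lemma measurable_ofReal_kernel (s : ℝ) :
    Measurable fun x : G => ENNReal.ofReal (kernel s x) := by
  have heq : (fun x : G => ENNReal.ofReal (kernel s x)) =
      fun x => ∑' j : ℕ, Set.indicator (Gset j \ Gset (j+1))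
        (fun _ => ENNReal.ofReal ((2:ℝ) ^ (s * (j:ℝ)))) x := by
    funext x
    by_cases h : ∃ i, x i ≠ 0
    · rw [tsum_eq_single (Nat.find h)]
      · rw [Set.indicator_of_mem, kernel, dif_pos h]
        constructor
        · intro i hi
          by_contra hne
          exact absurd hi (not_lt.mpr (Nat.find_le hne))
        · intro hmem
          exact Nat.find_spec h (hmem (Nat.find h) (Nat.lt_succ_self _))
      · intro j hj
        rw [Set.indicator_of_notMem]
        rintro ⟨h1, h2⟩
        apply hj
        have hle : j ≤ Nat.find h := by
          apply Nat.le_find_iff h _ |>.mpr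
          intro m hm
          simpa using h1 m hm
        have hge : Nat.find h ≤ j := by
          by_contra hc
          push_neg at hc
          apply h2
          intro i hi
          simpa using Nat.find_min h (lt_of_le_of_lt (Nat.lt_succ_iff.mp hi) hc)
        omega
    · rw [kernel, dif_neg h]
      push_neg at h
      symm
      simp only [ENNReal.ofReal_zero]
      apply Summable.tsum_eq_zero_iff (by exact ENNReal.summable) |>.mpr
      intro j
      apply Set.indicator_of_notMem
      rintro ⟨-, h2⟩
      exact h2 fun i _ => h i
  rw [heq]
  exact Measurable.ennreal_tsum fun j =>
    Measurable.indicator measurable_const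
      ((measurableSet_Gset j).diff (measurableSet_Gset (j+1)))

lemma measurableSet_Kset (n : ℕ) (x : G) : MeasurableSet (Kset n x) := by
  have : Kset n x = (fun y : G => x - y) ⁻¹' Gset n := rfl
  rw [this]
  exact (measurable_const.sub measurable_id) (measurableSet_Gset n)

lemma iInter_Kset (x : G) : (⋂ n, Kset n x) = {x} := by
  ext y
  simp only [Set.mem_iInter, Set.mem_singleton_iff, Kset, Gset, Set.mem_setOf_eq]
  constructor
  · intro h
    have : x - y = 0 := funext fun i => h (i+1) i (Nat.lt_succ_self i)
    exact (sub_eq_zero.mp this).symm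
  · rintro rfl i j _
    simp


/-- If μ has finite s-energy, then the set where limsup μ(K_n(x)) 2^{ns} > 0 has μ-measure zero. -/
theorem stmt11 (s : ℝ) (hs : 0 < s) (hs1 : s < 1)
    (μ : Measure G) [IsFiniteMeasure μ] (hna : ∀ x : G, μ {x} = 0)
    (hfin : energy s μ ≠ ⊤) :
    μ {x : G | 0 < limsup (fun n : ℕ =>
      μ (Kset n x) * ENNReal.ofReal ((2:ℝ) ^ ((n:ℝ) * s))) atTop} = 0 := by
  have hfin : (∫⁻ x, ∫⁻ y, ENNReal.ofReal (kernel s (x - y)) ∂μ ∂μ) ≠ ⊤ := hfin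
  set pot : G → ℝ≥0∞ := fun x => ∫⁻ y, ENNReal.ofReal (kernel s (x - y)) ∂μ with hpot
  have hker2 : Measurable fun p : G × G => ENNReal.ofReal (kernel s (p.1 - p.2)) :=
    (measurable_ofReal_kernel s).comp (measurable_fst.sub measurable_snd)
  have hmpot : Measurable pot := Measurable.lintegral_prod_right' hker2
  have hae : ∀ᵐ x ∂μ, pot x < ⊤ := ae_lt_top hmpot hfin
  rw [MeasureTheory.measure_eq_zero_iff_ae_notMem]
  filter_upwards [hae] with x hx
  simp only [Set.mem_setOf_eq, not_lt, nonpos_iff_eq_zero]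
  -- show limsup = 0
  set h : G → ℝ≥0∞ := fun y => ENNReal.ofReal (kernel s (x - y)) with hh
  have hmh : Measurable h := (measurable_ofReal_kernel s).comp (measurable_const.sub measurable_id)
  set ν : Measure G := μ.withDensity h with hν
  have hνK : ∀ n, ν (Kset n x) = ∫⁻ y in Kset n x, h y ∂μ :=
    fun n => withDensity_apply h (measurableSet_Kset n x)
  -- the key bound
  have hbound : ∀ n : ℕ, μ (Kset n x) * ENNReal.ofReal ((2:ℝ) ^ ((n:ℝ) * s)) ≤ ν (Kset n x) := by
    intro n
    rw [hνK]
    calc μ (Kset n x) * ENNReal.ofReal ((2:ℝ) ^ ((n:ℝ) * s))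
        = ENNReal.ofReal ((2:ℝ) ^ ((n:ℝ) * s)) * μ (Kset n x \ {x}) := by
          rw [measure_diff_null (hna x), mul_comm]
      _ = ∫⁻ _ in Kset n x \ {x}, ENNReal.ofReal ((2:ℝ) ^ ((n:ℝ) * s)) ∂μ := by
          rw [setLIntegral_const]
      _ ≤ ∫⁻ y in Kset n x \ {x}, h y ∂μ := by
          apply setLIntegral_mono' ((measurableSet_Kset n x).diff (measurableSet_singleton x))
          rintro y ⟨hy1, hy2⟩
          have hne : x - y ≠ 0 := sub_ne_zero.mpr (Ne.symm hy2)
          have hex : ∃ i, (x - y) i ≠ 0 := by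
            by_contra hc
            push_neg at hc
            exact hne (funext hc)
          have hfind : (n:ℝ) ≤ (Nat.find hex : ℝ) := by
            have : n ≤ Nat.find hex := by
              apply Nat.le_find_iff hex _ |>.mpr
              intro m hm
              simpa using hy1 m hm
            exact_mod_cast this
          simp only [hh, kernel, dif_pos hex]
          apply ENNReal.ofReal_le_ofReal
          rw [mul_comm (n:ℝ) s]
          exact Real.rpow_le_rpow_left_iff (by norm_num) |>.mpr
            (mul_le_mul_of_nonneg_left hfind hs.le)
      _ ≤ ∫⁻ y in Kset n x, h y ∂μ :=
          lintegral_mono' (Measure.restrict_mono Set.diff_subset le_rfl) le_rfl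
  -- ν (Kset n x) → ν {x} = 0
  have hanti : Antitone fun n => Kset n x := by
    intro m n hmn y hy i hi
    exact hy i (lt_of_lt_of_le hi hmn)
  have hfin0 : ν (Kset 0 x) ≠ ⊤ := by
    have : ν (Kset 0 x) ≤ ν Set.univ := measure_mono (Set.subset_univ _)
    have hνuniv : ν Set.univ = pot x := by
      rw [hν, withDensity_apply h MeasurableSet.univ, Measure.restrict_univ]
    exact ne_top_of_le_ne_top (by rw [hνuniv]; exact hx.ne) this
  have htend : Tendsto (fun n => ν (Kset n x)) atTop (𝓝 (ν (⋂ n, Kset n x))) :=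
    tendsto_measure_iInter_atTop (fun n => (measurableSet_Kset n x).nullMeasurableSet) hanti ⟨0, hfin0⟩
  have hν0 : ν (⋂ n, Kset n x) = 0 := by
    rw [iInter_Kset, hν, withDensity_apply h (measurableSet_singleton x),
      lintegral_singleton]
    have : h x = 0 := by
      simp only [hh, sub_self]
      rw [kernel, dif_neg (by push_neg; intro i; rfl)]
      simp
    rw [this, zero_mul]
  rw [hν0] at htend
  have htend0 : Tendsto (fun n : ℕ =>
      μ (Kset n x) * ENNReal.ofReal ((2:ℝ) ^ ((n:ℝ) * s))) atTop (𝓝 0) :=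
    tendsto_of_tendsto_of_tendsto_of_le_of_le tendsto_const_nhds htend
      (fun n => zero_le) hbound
  exact htend0.limsup_eq
end

section
/- For 0 < s < 1, the Walsh–Fourier coefficients of the s-kernel satisfy \hatφ_s(k) = O(k^{s-1}) as k → ∞. -/
open MeasureTheory Filter Topology
open scoped ENNReal Classical

noncomputable def eG (i : ℕ) : G := fun j => if j = i then 1 else 0

lemma abs_walsh (k : ℕ) (x : G) : |walsh k x| = 1 := by
  unfold walsh
  rw [Finset.abs_prod]
  apply Finset.prod_eq_one
  intro i _
  split <;> simp

lemma integrable_walsh (k : ℕ) (lam : Measure G) [IsProbabilityMeasure lam] :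
    Integrable (walsh k) lam := by
  refine ⟨(measurable_walsh k).aestronglyMeasurable, ?_⟩
  apply HasFiniteIntegral.of_bounded (C := 1)
  filter_upwards with x
  rw [Real.norm_eq_abs, abs_walsh]

lemma eG_apply_ne {i j : ℕ} (h : j ≠ i) : eG i j = 0 := if_neg h

lemma walsh_flip {k i : ℕ} (hk : Nat.testBit k i = true) (x : G) :
    walsh k (eG i + x) = - walsh k x := by
  have h2k : 2 ^ i ≤ k := by
    by_contra h
    rw [Nat.testBit_lt_two_pow (by omega)] at hk
    exact Bool.false_ne_true hk
  have hik : i < k := lt_of_lt_of_le (Nat.lt_two_pow_self (n := i)) h2k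
  have hmem : i ∈ Finset.range k := Finset.mem_range.2 hik
  unfold walsh
  rw [← Finset.mul_prod_erase _ _ hmem, ← Finset.mul_prod_erase _ _ hmem]
  have h1 : ∏ j ∈ (Finset.range k).erase i,
      (if Nat.testBit k j ∧ (eG i + x) j = 1 then (-1:ℝ) else 1)
      = ∏ j ∈ (Finset.range k).erase i,
      (if Nat.testBit k j ∧ x j = 1 then (-1:ℝ) else 1) := by
    apply Finset.prod_congr rfl
    intro j hj
    have hji : j ≠ i := Finset.ne_of_mem_erase hj
    have : (eG i + x) j = x j := by
      show eG i j + x j = x j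
      rw [eG_apply_ne hji, zero_add]
    rw [this]
  have h2 : (if Nat.testBit k i ∧ (eG i + x) i = 1 then (-1:ℝ) else 1)
      = -(if Nat.testBit k i ∧ x i = 1 then (-1:ℝ) else 1) := by
    have he : (eG i + x) i = 1 + x i := by
      show eG i i + x i = 1 + x i
      rw [eG, if_pos rfl]
    rw [he, hk]
    simp only [true_and]
    rcases (by decide : ∀ a : ZMod 2, a = 0 ∨ a = 1) (x i) with h | h <;> rw [h]
    · rw [if_pos (by decide), if_neg (by decide)]
    · rw [if_neg (by decide), if_pos (by decide)]; norm_num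
  rw [h1, h2]
  ring

lemma eG_add_mem_Gset {i n : ℕ} (hin : n ≤ i) {x : G} :
    eG i + x ∈ Gset n ↔ x ∈ Gset n := by
  have key : ∀ m < n, (eG i + x) m = x m := by
    intro m hm
    show eG i m + x m = x m
    rw [eG_apply_ne (by omega), zero_add]
  constructor
  · intro h m hm; rw [← key m hm]; exact h m hm
  · intro h m hm; rw [key m hm]; exact h m hm

lemma meas_Gset (lam : Measure G) [IsProbabilityMeasure lam] [lam.IsAddLeftInvariant] :
    ∀ n, lam (Gset n) = (2 : ℝ≥0∞)⁻¹ ^ n := by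
  intro n
  induction n with
  | zero =>
    have : Gset 0 = Set.univ := by ext x; simp [Gset]
    simp [this]
  | succ n ih =>
    have hsplit : Gset n = Gset (n + 1) ∪ ((eG n + ·) ⁻¹' Gset (n + 1)) := by
      ext x
      constructor
      · intro hx
        rcases (by decide : ∀ a : ZMod 2, a = 0 ∨ a = 1) (x n) with h | h
        · left; intro i hi
          rcases Nat.lt_succ_iff_lt_or_eq.1 hi with h' | h'
          · exact hx i h'
          · rw [h']; exact h
        · right
          intro i hi
          show eG n i + x i = 0
          rcases Nat.lt_succ_iff_lt_or_eq.1 hi with h' | h'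
          · rw [eG_apply_ne (by omega), zero_add]; exact hx i h'
          · subst h'; rw [eG, if_pos rfl, h]; decide
      · rintro (hx | hx)
        · intro i hi; exact hx i (by omega)
        · intro i hi
          have := hx i (by omega)
          have he : eG n i + x i = 0 := this
          rwa [eG_apply_ne (by omega), zero_add] at he
    have hdisj : Disjoint (Gset (n + 1)) ((eG n + ·) ⁻¹' Gset (n + 1)) := by
      rw [Set.disjoint_left]
      intro x hx hx'
      have h0 : x n = 0 := hx n (by omega)
      have h1 : eG n n + x n = 0 := hx' n (by omega)
      rw [eG, if_pos rfl, h0] at h1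
      exact absurd h1 (by decide)
    have hmeas : lam ((eG n + ·) ⁻¹' Gset (n + 1)) = lam (Gset (n + 1)) :=
      measure_preimage_add lam (eG n) (Gset (n + 1))
    have hadd : lam (Gset n) = lam (Gset (n + 1)) + lam (Gset (n + 1)) := by
      rw [hsplit, measure_union hdisj ((measurableSet_Gset (n+1)).preimage
        (measurable_const_add (eG n))), hmeas]
    rw [ih] at hadd
    have hne : lam (Gset (n + 1)) ≠ ⊤ := measure_ne_top lam _
    have h2 : (2 : ℝ≥0∞) * lam (Gset (n + 1)) = (2 : ℝ≥0∞)⁻¹ ^ n := by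
      rw [two_mul]; exact hadd.symm
    have : lam (Gset (n + 1)) = (2 : ℝ≥0∞)⁻¹ ^ n / 2 :=
      (ENNReal.eq_div_iff (by norm_num) (by norm_num)).2 h2
    rw [this, pow_succ, ENNReal.div_eq_inv_mul, mul_comm]

lemma walsh_eq_one_on_Gset {k j : ℕ} (hkj : k < 2 ^ j) {x : G} (hx : x ∈ Gset j) :
    walsh k x = 1 := by
  unfold walsh
  apply Finset.prod_eq_one
  intro i _
  rw [if_neg]
  rintro ⟨hbit, hxi⟩
  have h2i : 2 ^ i ≤ k := by
    by_contra h
    rw [Nat.testBit_lt_two_pow (by omega)] at hbit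
    exact Bool.false_ne_true hbit
  have hij : i < j := by
    have := lt_of_le_of_lt h2i hkj
    exact (Nat.pow_lt_pow_iff_right (by omega)).1 this
  rw [hx i hij] at hxi
  exact absurd hxi (by decide)

lemma setIntegral_walsh (lam : Measure G) [IsProbabilityMeasure lam]
    [lam.IsAddLeftInvariant] (k j : ℕ) :
    ∫ x in Gset j, walsh k x ∂lam = if k < 2 ^ j then ((2:ℝ)⁻¹) ^ j else 0 := by
  by_cases hkj : k < 2 ^ j
  · rw [if_pos hkj]
    rw [setIntegral_congr_fun (measurableSet_Gset j)
      (fun x hx => walsh_eq_one_on_Gset hkj hx)]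
    rw [setIntegral_const, measureReal_def, meas_Gset lam j, smul_eq_mul, mul_one]
    simp
  · rw [if_neg hkj]
    obtain ⟨i, hij, hbit⟩ := Nat.exists_ge_and_testBit_of_ge_two_pow (le_of_not_gt hkj)
    set F : G → ℝ := Set.indicator (Gset j) (walsh k) with hF
    have hFdef : ∫ x in Gset j, walsh k x ∂lam = ∫ x, F x ∂lam :=
      (integral_indicator (measurableSet_Gset j)).symm
    have key : ∀ x, F (eG i + x) = - F x := by
      intro x
      by_cases hx : x ∈ Gset j
      · rw [hF, Set.indicator_of_mem ((eG_add_mem_Gset hij).2 hx),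
          Set.indicator_of_mem hx, walsh_flip hbit]
      · rw [hF, Set.indicator_of_notMem (fun h => hx ((eG_add_mem_Gset hij).1 h)),
          Set.indicator_of_notMem hx, neg_zero]
    have h1 : ∫ x, F x ∂lam = ∫ x, F (eG i + x) ∂lam :=
      (integral_add_left_eq_self F (eG i)).symm
    have h2 : ∫ x, F (eG i + x) ∂lam = - ∫ x, F x ∂lam := by
      simp_rw [key]
      exact integral_neg F
    rw [hFdef]
    have := h1.trans h2
    linarith

noncomputable def fker (s : ℝ) (k j : ℕ) : G → ℝ :=
  Set.indicator (Gset j \ Gset (j+1)) (fun y => (2:ℝ) ^ (s * (j:ℝ)) * walsh k y)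

lemma Gset_anti {j : ℕ} : Gset (j+1) ⊆ Gset j := fun x hx i hi => hx i (by omega)

lemma kernel_mul_walsh_eq_tsum (s : ℝ) (k : ℕ) (x : G) :
    kernel s x * walsh k x = ∑' j, fker s k j x := by
  by_cases h : ∃ i, x i ≠ 0
  · set j0 := Nat.find h with hj0
    have hxin : x ∈ Gset j0 \ Gset (j0+1) := by
      constructor
      · intro i hi
        have := Nat.find_min h hi
        exact not_not.1 this
      · intro hmem
        exact (Nat.find_spec h) (hmem j0 (by omega))
    rw [tsum_eq_single j0 ?_]
    · rw [fker, Set.indicator_of_mem hxin, kernel, dif_pos h]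
    · intro j hj
      have hnot : x ∉ Gset j \ Gset (j+1) := by
        rcases lt_or_gt_of_ne hj with hlt | hgt
        · intro hmem
          apply hmem.2
          intro i hi
          exact not_not.1 (Nat.find_min h (by omega))
        · intro hmem
          exact (Nat.find_spec h) (hmem.1 j0 hgt)
      rw [fker, Set.indicator_of_notMem hnot]
  · push_neg at h
    have hz : ∀ j, fker s k j x = 0 := by
      intro j
      have : x ∉ Gset j \ Gset (j+1) := by
        intro hmem
        exact hmem.2 (fun i _ => h i)
      rw [fker, Set.indicator_of_notMem this]
    rw [kernel, dif_neg]
    · simp [hz]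
    · rintro ⟨i, hi⟩; exact hi (h i)

lemma integral_fker (s : ℝ) (lam : Measure G) [IsProbabilityMeasure lam]
    [lam.IsAddLeftInvariant] (k j : ℕ) :
    ∫ x, fker s k j x ∂lam = (2:ℝ) ^ (s * (j:ℝ)) *
      ((if k < 2 ^ j then ((2:ℝ)⁻¹) ^ j else 0)
        - (if k < 2 ^ (j+1) then ((2:ℝ)⁻¹) ^ (j+1) else 0)) := by
  rw [fker, integral_indicator ((measurableSet_Gset j).diff (measurableSet_Gset (j+1)))]
  rw [integral_diff (measurableSet_Gset (j+1))
    (((integrable_walsh k lam).const_mul _).integrableOn) Gset_anti]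
  rw [integral_const_mul, integral_const_mul, setIntegral_walsh, setIntegral_walsh]
  ring

lemma two_rpow_id (s : ℝ) (j : ℕ) :
    (2:ℝ) ^ (s * (j:ℝ)) * ((2:ℝ)⁻¹) ^ j = ((2:ℝ) ^ (s-1)) ^ j := by
  have h1 : ((2:ℝ) ^ (s-1)) ^ j = (2:ℝ) ^ ((s-1) * (j:ℝ)) := by
    rw [← Real.rpow_natCast ((2:ℝ) ^ (s-1)) j, ← Real.rpow_mul (by norm_num)]
  have h2 : ((2:ℝ)⁻¹) ^ j = (2:ℝ) ^ (-(j:ℝ)) := by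
    rw [Real.rpow_neg (by norm_num), Real.rpow_natCast, inv_pow]
  rw [h1, h2, ← Real.rpow_add (by norm_num : (0:ℝ) < 2)]
  congr 1
  ring

lemma lintegral_fker_le (s : ℝ) (lam : Measure G) [IsProbabilityMeasure lam]
    [lam.IsAddLeftInvariant] (k j : ℕ) :
    ∫⁻ x, ‖fker s k j x‖₊ ∂lam ≤ ENNReal.ofReal (((2:ℝ) ^ (s-1)) ^ j) := by
  have hmeasA : MeasurableSet (Gset j \ Gset (j+1)) :=
    (measurableSet_Gset j).diff (measurableSet_Gset (j+1))
  have hb : ∀ x, (‖fker s k j x‖₊ : ℝ≥0∞) ≤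
      (Gset j \ Gset (j+1)).indicator
        (fun _ => ENNReal.ofReal ((2:ℝ) ^ (s * (j:ℝ)))) x := by
    intro x
    by_cases hx : x ∈ Gset j \ Gset (j+1)
    · rw [fker, Set.indicator_of_mem hx, Set.indicator_of_mem hx]
      have hn : ‖(2:ℝ) ^ (s * (j:ℝ)) * walsh k x‖ = (2:ℝ) ^ (s * (j:ℝ)) := by
        rw [norm_mul, Real.norm_eq_abs, Real.norm_eq_abs, abs_walsh, mul_one,
          abs_of_pos (Real.rpow_pos_of_pos two_pos _)]
      rw [← enorm_eq_nnnorm, ← ofReal_norm, hn]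
    · rw [fker, Set.indicator_of_notMem hx, Set.indicator_of_notMem hx]
      simp
  calc ∫⁻ x, ‖fker s k j x‖₊ ∂lam
      ≤ ∫⁻ x, (Gset j \ Gset (j+1)).indicator
          (fun _ => ENNReal.ofReal ((2:ℝ) ^ (s * (j:ℝ)))) x ∂lam := lintegral_mono hb
    _ = ENNReal.ofReal ((2:ℝ) ^ (s * (j:ℝ))) * lam (Gset j \ Gset (j+1)) :=
        lintegral_indicator_const hmeasA _
    _ ≤ ENNReal.ofReal ((2:ℝ) ^ (s * (j:ℝ))) * ENNReal.ofReal (((2:ℝ)⁻¹) ^ j) := by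
        gcongr
        refine le_trans (measure_mono Set.diff_subset) ?_
        rw [meas_Gset lam j]
        rw [ENNReal.ofReal_pow (by norm_num), ENNReal.ofReal_inv_of_pos (by norm_num)]
        norm_num
    _ = ENNReal.ofReal (((2:ℝ) ^ (s-1)) ^ j) := by
        rw [← ENNReal.ofReal_mul (Real.rpow_nonneg (by norm_num) _), two_rpow_id]

lemma phiHat_eq (s : ℝ) (lam : Measure G) [IsProbabilityMeasure lam]
    [lam.IsAddLeftInvariant] (hs1 : s < 1) (k : ℕ) :
    phiHat s lam k = ∑' j : ℕ, (2:ℝ) ^ (s * (j:ℝ)) *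
      ((if k < 2 ^ j then ((2:ℝ)⁻¹) ^ j else 0)
        - (if k < 2 ^ (j+1) then ((2:ℝ)⁻¹) ^ (j+1) else 0)) := by
  have hr0 : (0:ℝ) ≤ (2:ℝ) ^ (s-1) := (Real.rpow_pos_of_pos two_pos _).le
  have hr1 : (2:ℝ) ^ (s-1) < 1 :=
    Real.rpow_lt_one_of_one_lt_of_neg (by norm_num) (by linarith)
  have hsummable : Summable (fun j : ℕ => ((2:ℝ) ^ (s-1)) ^ j) :=
    summable_geometric_of_lt_one hr0 hr1
  have hmeas : ∀ j : ℕ, AEStronglyMeasurable (fker s k j) lam := by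
    intro j
    exact ((measurable_const.mul (measurable_walsh k)).indicator
      ((measurableSet_Gset j).diff (measurableSet_Gset (j+1)))).aestronglyMeasurable
  have hne : ∑' j : ℕ, ∫⁻ x, ‖fker s k j x‖₊ ∂lam ≠ ⊤ := by
    apply ne_top_of_le_ne_top (b := ∑' j : ℕ, ENNReal.ofReal (((2:ℝ) ^ (s-1)) ^ j))
    · rw [← ENNReal.ofReal_tsum_of_nonneg (fun j => pow_nonneg hr0 j) hsummable]
      exact ENNReal.ofReal_ne_top
    · exact ENNReal.tsum_le_tsum (fun j => lintegral_fker_le s lam k j)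
  calc phiHat s lam k = ∫ x, ∑' j, fker s k j x ∂lam := by
        rw [phiHat]
        exact integral_congr_ae (Filter.Eventually.of_forall
          (fun x => kernel_mul_walsh_eq_tsum s k x))
    _ = ∑' j, ∫ x, fker s k j x ∂lam := integral_tsum hmeas hne
    _ = _ := tsum_congr (fun j => integral_fker s lam k j)

/-- The Walsh–Fourier coefficients of the s-kernel satisfy \hatφ_s(k) = O(k^{s-1}). -/
theorem stmt18 (s : ℝ) (hs : 0 < s) (hs1 : s < 1)
    (lam : Measure G) [IsProbabilityMeasure lam] [lam.IsAddLeftInvariant] :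
    (fun k : ℕ => phiHat s lam k) =O[atTop] (fun k : ℕ => (k:ℝ) ^ (s - 1)) := by
  set r : ℝ := (2:ℝ) ^ (s - 1) with hrdef
  have hr0 : 0 < r := Real.rpow_pos_of_pos two_pos _
  have hr1 : r < 1 := Real.rpow_lt_one_of_one_lt_of_neg (by norm_num) (by linarith)
  have hgeom : Summable (fun j : ℕ => r ^ j) := summable_geometric_of_lt_one hr0.le hr1
  rw [Asymptotics.isBigO_iff]
  refine ⟨(1 - r)⁻¹ * 2, ?_⟩
  filter_upwards [eventually_ge_atTop 1] with k hk
  set a := Nat.log 2 k with ha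
  have hk0 : k ≠ 0 := by omega
  have hka : 2 ^ a ≤ k := Nat.pow_log_le_self 2 hk0
  have hka' : k < 2 ^ (a + 1) := Nat.lt_pow_succ_log_self (by norm_num) k
  set t : ℕ → ℝ := fun j => (2:ℝ) ^ (s * (j:ℝ)) *
      ((if k < 2 ^ j then ((2:ℝ)⁻¹) ^ j else 0)
        - (if k < 2 ^ (j+1) then ((2:ℝ)⁻¹) ^ (j+1) else 0)) with ht
  set h : ℕ → ℝ := fun j => if j < a then 0 else r ^ j with hh
  have hbound : ∀ j, |t j| ≤ h j := by
    intro j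
    by_cases hja : j < a
    · have h1 : ¬ (k < 2 ^ j) := by
        have : 2 ^ j ≤ 2 ^ a := Nat.pow_le_pow_right (by norm_num) (by omega)
        omega
      have h2 : ¬ (k < 2 ^ (j+1)) := by
        have : 2 ^ (j+1) ≤ 2 ^ a := Nat.pow_le_pow_right (by norm_num) (by omega)
        omega
      simp [hh, ht, h1, h2, hja]
    · rw [hh]
      simp only [if_neg hja]
      have hp : (0:ℝ) < ((2:ℝ)⁻¹) ^ j := by positivity
      have hps : ((2:ℝ)⁻¹) ^ (j+1) = ((2:ℝ)⁻¹) ^ j * 2⁻¹ := pow_succ _ _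
      have habs : |(if k < 2 ^ j then ((2:ℝ)⁻¹) ^ j else 0)
          - (if k < 2 ^ (j+1) then ((2:ℝ)⁻¹) ^ (j+1) else 0)| ≤ ((2:ℝ)⁻¹) ^ j := by
        split_ifs <;> rw [abs_le] <;> constructor <;> nlinarith
      have hrp : (0:ℝ) < (2:ℝ) ^ (s * (j:ℝ)) := Real.rpow_pos_of_pos two_pos _
      calc |t j| = (2:ℝ) ^ (s * (j:ℝ)) * |(if k < 2 ^ j then ((2:ℝ)⁻¹) ^ j else 0)
              - (if k < 2 ^ (j+1) then ((2:ℝ)⁻¹) ^ (j+1) else 0)| := by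
            rw [ht, abs_mul, abs_of_pos hrp]
        _ ≤ (2:ℝ) ^ (s * (j:ℝ)) * ((2:ℝ)⁻¹) ^ j := by
            exact mul_le_mul_of_nonneg_left habs hrp.le
        _ = r ^ j := two_rpow_id s j
  have hh_nonneg : ∀ j, 0 ≤ h j := by
    intro j; rw [hh]; dsimp only; split
    · exact le_refl 0
    · positivity
  have hh_le : ∀ j, h j ≤ r ^ j := by
    intro j; rw [hh]; dsimp only; split
    · positivity
    · exact le_refl _
  have hh_summable : Summable h := Summable.of_nonneg_of_le hh_nonneg hh_le hgeom
  have ht_abs_summable : Summable (fun j => |t j|) :=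
    Summable.of_nonneg_of_le (fun j => abs_nonneg _) hbound hh_summable
  have hsum_h : ∑' j, h j = (1 - r)⁻¹ * r ^ a := by
    rw [← Summable.sum_add_tsum_nat_add a hh_summable]
    have h1 : ∑ j ∈ Finset.range a, h j = 0 := by
      apply Finset.sum_eq_zero
      intro j hj
      rw [hh]; exact if_pos (Finset.mem_range.1 hj)
    have h2 : ∀ i : ℕ, h (i + a) = r ^ i * r ^ a := by
      intro i
      rw [hh]
      simp only [if_neg (by omega : ¬ (i + a < a))]
      rw [pow_add]
    rw [h1, zero_add]
    simp_rw [h2]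
    rw [tsum_mul_right, tsum_geometric_of_lt_one hr0.le hr1]
  have hmain : |phiHat s lam k| ≤ (1 - r)⁻¹ * r ^ a := by
    rw [phiHat_eq s lam hs1 k]
    calc |∑' j, t j| ≤ ∑' j, |t j| := by
          have := norm_tsum_le_tsum_norm (f := t) (by simpa [Real.norm_eq_abs] using ht_abs_summable)
          simpa [Real.norm_eq_abs] using this
      _ ≤ ∑' j, h j := Summable.tsum_le_tsum hbound ht_abs_summable hh_summable
      _ = (1 - r)⁻¹ * r ^ a := hsum_h
  have hkpos : (0:ℝ) < (k:ℝ) := by exact_mod_cast Nat.pos_of_ne_zero hk0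
  have hknn : (0:ℝ) ≤ (k:ℝ) ^ (s-1) := Real.rpow_nonneg hkpos.le _
  have hra : r ^ a ≤ 2 * (k:ℝ) ^ (s-1) := by
    have h1 : ((2:ℝ) ^ (a+1)) ^ (s-1) ≤ (k:ℝ) ^ (s-1) :=
      Real.rpow_le_rpow_of_nonpos hkpos (by exact_mod_cast hka'.le) (by linarith)
    have h2 : ((2:ℝ) ^ (a+1)) ^ (s-1) = r ^ (a+1) := by
      rw [← Real.rpow_natCast (2:ℝ) (a+1), ← Real.rpow_mul (by norm_num), hrdef,
        ← Real.rpow_natCast ((2:ℝ) ^ (s-1)) (a+1), ← Real.rpow_mul (by norm_num)]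
      congr 1
      ring
    rw [h2, pow_succ] at h1
    have hrinv : r⁻¹ ≤ 2 := by
      have hinv : r⁻¹ = (2:ℝ) ^ (1-s) := by
        rw [hrdef, ← Real.rpow_neg (by norm_num)]
        congr 1; ring
      rw [hinv]
      calc (2:ℝ) ^ (1-s) ≤ (2:ℝ) ^ (1:ℝ) :=
            Real.rpow_le_rpow_of_exponent_le (by norm_num) (by linarith)
        _ = 2 := Real.rpow_one 2
    have : r ^ a = (r ^ a * r) * r⁻¹ := by
      field_simp
    rw [this]
    calc (r ^ a * r) * r⁻¹ ≤ (k:ℝ) ^ (s-1) * r⁻¹ := by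
          apply mul_le_mul_of_nonneg_right h1 (by positivity)
      _ ≤ (k:ℝ) ^ (s-1) * 2 := mul_le_mul_of_nonneg_left hrinv hknn
      _ = 2 * (k:ℝ) ^ (s-1) := mul_comm _ _
  have h1r : (0:ℝ) < 1 - r := by linarith
  calc ‖phiHat s lam k‖ = |phiHat s lam k| := Real.norm_eq_abs _
    _ ≤ (1 - r)⁻¹ * r ^ a := hmain
    _ ≤ (1 - r)⁻¹ * (2 * (k:ℝ) ^ (s-1)) := by
        apply mul_le_mul_of_nonneg_left hra (by positivity)
    _ = (1 - r)⁻¹ * 2 * ‖(k:ℝ) ^ (s-1)‖ := by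
        rw [Real.norm_eq_abs, abs_of_nonneg hknn]; ring
end
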